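/- Define γ(n) = (1/(4π))·(Γ(1/n)²/Γ(2/n))·√(4·tan(π/n)/n) for natural numbers n ≥ 3, where Γ is the Gamma function. Then γ(n) tends to 1/√π as n → ∞. -/

import Mathlib

open Real Filter

theorem stmt_5 :
    Tendsto (fun n : ℕ =>
        (1/(4*π)) * (Real.Gamma (1/(n:ℝ))^2 / Real.Gamma (2/(n:ℝ))) *
          Real.sqrt (4 * Real.tan (π/(n:ℝ)) / (n:ℝ)))
      atTop (nhds (1 / Real.sqrt π)) := by
  have hπ : (0:ℝ) < π := Real.pi_pos
  -- auxiliary limits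
  have h1 : Tendsto (fun n : ℕ => 1/(n:ℝ)) atTop (nhds 0) :=
    tendsto_one_div_atTop_nhds_zero_nat
  have h2 : Tendsto (fun n : ℕ => 2/(n:ℝ)) atTop (nhds 0) := by
    have := h1.const_mul 2
    simpa [mul_one_div, div_eq_mul_inv] using this
  have hGamma1 : ContinuousAt Real.Gamma 1 := by
    refine (Real.differentiableAt_Gamma ?_).continuousAt
    intro m
    have : (0:ℝ) < 1 := one_pos
    intro h
    have : (0:ℝ) ≤ (m:ℝ) := Nat.cast_nonneg m
    nlinarith [h]
  have hG1 : Tendsto (fun n : ℕ => Real.Gamma (1 + 1/(n:ℝ))) atTop (nhds 1) := by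
    have : Tendsto (fun n : ℕ => 1 + 1/(n:ℝ)) atTop (nhds 1) := by
      simpa using (tendsto_const_nhds.add h1)
    simpa [Function.comp_def] using hGamma1.tendsto.comp this
  have hG2 : Tendsto (fun n : ℕ => Real.Gamma (1 + 2/(n:ℝ))) atTop (nhds 1) := by
    have : Tendsto (fun n : ℕ => 1 + 2/(n:ℝ)) atTop (nhds 1) := by
      simpa using (tendsto_const_nhds.add h2)
    simpa [Function.comp_def] using hGamma1.tendsto.comp this
  -- tan x / x → 1
  have htan : Tendsto (fun x : ℝ => Real.tan x / x) (nhdsWithin 0 {(0:ℝ)}ᶜ) (nhds 1) := by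
    have hd : HasDerivAt Real.tan 1 0 := by
      have := Real.hasDerivAt_tan (x := 0) (by simp)
      simpa using this
    refine (hasDerivAt_iff_tendsto_slope.mp hd).congr' ?_
    filter_upwards [self_mem_nhdsWithin] with x hx
    simp [slope_def_field]
  have hπn0 : Tendsto (fun n : ℕ => π/(n:ℝ)) atTop (nhdsWithin 0 {(0:ℝ)}ᶜ) := by
    apply tendsto_nhdsWithin_of_tendsto_nhds_of_eventually_within
    · simpa [div_eq_mul_inv] using (h1.const_mul π).congr (fun n => by ring)
    · filter_upwards [eventually_ge_atTop 1] with n hn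
      have : (0:ℝ) < n := by exact_mod_cast hn
      exact ne_of_gt (div_pos hπ this)
  have hT : Tendsto (fun n : ℕ => Real.tan (π/(n:ℝ)) / (π/(n:ℝ))) atTop (nhds 1) :=
    htan.comp hπn0
  -- sqrt part limit
  have hS : Tendsto (fun n : ℕ => Real.sqrt ((n:ℝ) * Real.tan (π/(n:ℝ)) / π)) atTop (nhds 1) := by
    have key : Tendsto (fun n : ℕ => (n:ℝ) * Real.tan (π/(n:ℝ)) / π) atTop (nhds 1) := by
      refine hT.congr' ?_
      filter_upwards [eventually_ge_atTop 1] with n hn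
      have hn0 : (0:ℝ) < n := by exact_mod_cast hn
      field_simp
    have := (Real.continuous_sqrt.tendsto 1).comp key
    simpa [Function.comp_def] using this
  -- the rewritten function tends to the limit
  have hmain : Tendsto (fun n : ℕ =>
      (1 / Real.sqrt π) * (Real.Gamma (1 + 1/(n:ℝ))^2 / Real.Gamma (1 + 2/(n:ℝ))) *
        Real.sqrt ((n:ℝ) * Real.tan (π/(n:ℝ)) / π)) atTop (nhds (1 / Real.sqrt π)) := by
    have := ((tendsto_const_nhds (x := 1 / Real.sqrt π)).mul
      (((hG1.pow 2).div hG2 (by norm_num)))).mul hS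
    simpa using this
  -- eventual equality
  refine hmain.congr' ?_
  filter_upwards [eventually_ge_atTop 3] with n hn
  have hn0 : (0:ℝ) < n := by positivity
  have hne : (n:ℝ) ≠ 0 := ne_of_gt hn0
  have hΓa : Real.Gamma (1/(n:ℝ)) = (n:ℝ) * Real.Gamma (1 + 1/(n:ℝ)) := by
    have h := Real.Gamma_add_one (s := 1/(n:ℝ)) (by positivity)
    rw [add_comm] at h
    rw [h]; field_simp
  have hΓb : Real.Gamma (2/(n:ℝ)) = ((n:ℝ)/2) * Real.Gamma (1 + 2/(n:ℝ)) := by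
    have h := Real.Gamma_add_one (s := 2/(n:ℝ)) (by positivity)
    rw [add_comm] at h
    rw [h]; field_simp
  -- tan nonneg
  have hlt : π/(n:ℝ) < π/2 := by
    apply div_lt_div_of_pos_left hπ (by norm_num)
    exact_mod_cast lt_of_lt_of_le (by norm_num) hn
  have htannn : 0 ≤ Real.tan (π/(n:ℝ)) :=
    Real.tan_nonneg_of_nonneg_of_le_pi_div_two (le_of_lt (div_pos hπ hn0)) (le_of_lt hlt)
  -- sqrt factorization
  have hsq : Real.sqrt (4 * Real.tan (π/(n:ℝ)) / (n:ℝ))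
      = (2 * Real.sqrt π / (n:ℝ)) * Real.sqrt ((n:ℝ) * Real.tan (π/(n:ℝ)) / π) := by
    have heq : 4 * Real.tan (π/(n:ℝ)) / (n:ℝ)
        = (2 * Real.sqrt π / (n:ℝ))^2 * ((n:ℝ) * Real.tan (π/(n:ℝ)) / π) := by
      rw [div_pow, mul_pow, Real.sq_sqrt (le_of_lt hπ)]
      field_simp
      ring
    rw [heq, Real.sqrt_mul (sq_nonneg _), Real.sqrt_sq (by positivity)]
  rw [hΓa, hΓb, hsq]
  have hΓne : Real.Gamma (1 + 2/(n:ℝ)) ≠ 0 := by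
    apply ne_of_gt
    apply Real.Gamma_pos_of_pos
    positivity
  have hsqrtπ : Real.sqrt π ≠ 0 := ne_of_gt (Real.sqrt_pos.mpr hπ)
  have hππ : Real.sqrt π * Real.sqrt π = π := Real.mul_self_sqrt (le_of_lt hπ)
  field_simp
  ring_nf
  rw [Real.sq_sqrt (le_of_lt hπ)]
  ring
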